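/- Partial-fraction identity for the inverse Cauchy matrix (Lemma 2.4 of the paper): Let K be a field, m ≥ 1, and ã, b̃ : Fin m → K with the ã_i pairwise distinct, the b̃_j pairwise distinct, and ã_i ≠ b̃_j for all i, j, so that the Cauchy matrix A with entries A i j = (ã_i − b̃_j)⁻¹ is invertible. Then for all z, w ∈ K with z ≠ ã_i for all i, w ≠ b̃_j for all j, and z ≠ w, one has ∑_{i,j} (A⁻¹)_{j i} / ((z − ã_i)(w − b̃_j)) = (1/(w − z)) · ( ∏_{k} ((w − ã_k)/(z − ã_k)) · ((z − b̃_k)/(w − b̃_k)) − 1 ). -/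

import Mathlib

open Finset Polynomial Matrix

lemma lag_eval {K : Type*} [Field K] {ι : Type*} [DecidableEq ι] (s : Finset ι) (v : ι → K)
    (hv : Set.InjOn v s) (p : K[X]) (hdeg : p.degree < s.card) (w : K) :
    p.eval w = ∑ i ∈ s, p.eval (v i) * ∏ j ∈ s.erase i, ((v i - v j)⁻¹ * (w - v j)) := by
  conv_lhs => rw [Lagrange.eq_interpolate hv hdeg]
  rw [Lagrange.interpolate_apply, Polynomial.eval_finset_sum]
  refine Finset.sum_congr rfl fun i hi => ?_
  rw [Polynomial.eval_mul, Polynomial.eval_C, Lagrange.basis, Polynomial.eval_prod]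
  congr 1
  refine Finset.prod_congr rfl fun j hj => ?_
  simp [Lagrange.basisDivisor]

lemma cauchy_isUnit {K : Type*} [Field K] {m : ℕ} (ta tb : Fin m → K)
    (hta : Function.Injective ta) (htb : Function.Injective tb)
    (hab : ∀ i j, ta i ≠ tb j) :
    IsUnit (Matrix.of fun i j => (ta i - tb j)⁻¹ : Matrix (Fin m) (Fin m) K) := by
  rw [← Matrix.vecMul_injective_iff_isUnit]
  have key : ∀ x : Fin m → K, Matrix.vecMul x (Matrix.of fun i j => (ta i - tb j)⁻¹) = 0 → x = 0 := by
    intro x hx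
    have hx' : ∀ j, ∑ i, x i * (ta i - tb j)⁻¹ = 0 := by
      intro j
      have := congr_fun hx j
      simpa [Matrix.vecMul, dotProduct] using this
    set N : K[X] := ∑ i, C (x i) * ∏ k ∈ univ.erase i, (C (ta k) - X) with hNdef
    have hdeg1 : ∀ (c : K), (Polynomial.C c - X).degree = 1 := fun c => by
      rw [show Polynomial.C c - X = -(X - Polynomial.C c) by ring, degree_neg, degree_X_sub_C]
    have hprodd : ∀ i : Fin m, (∏ k ∈ univ.erase i, (C (ta k) - X)).degree
        = ((univ.erase i).card : WithBot ℕ) := by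
      intro i
      rw [Polynomial.degree_prod]
      simp [hdeg1]
    have hdegN : N.degree < ((univ : Finset (Fin m)).card : WithBot ℕ) := by
      refine lt_of_le_of_lt (Polynomial.degree_sum_le _ _) ?_
      rw [Finset.sup_lt_iff (by simp [card_univ])]
      intro i _
      refine lt_of_le_of_lt (degree_mul_le _ _) ?_
      rw [hprodd i]
      refine lt_of_le_of_lt (add_le_add degree_C_le le_rfl) ?_
      rw [zero_add, card_erase_of_mem (mem_univ i), card_univ, Fintype.card_fin]
      exact_mod_cast Nat.sub_lt i.pos one_pos
    have hN0 : N = 0 := by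
      refine Polynomial.eq_zero_of_degree_lt_of_eval_index_eq_zero (v := tb) univ
        (htb.injOn) hdegN ?_
      intro j _
      rw [hNdef, Polynomial.eval_finset_sum]
      have hterm : ∀ i : Fin m, (C (x i) * ∏ k ∈ univ.erase i, (C (ta k) - X)).eval (tb j)
          = (x i * (ta i - tb j)⁻¹) * ∏ k, (ta k - tb j) := by
        intro i
        rw [eval_mul, eval_C, eval_prod]
        simp only [eval_sub, eval_C, eval_X]
        rw [mul_assoc]
        congr 1
        rw [← Finset.mul_prod_erase univ _ (mem_univ i), ← mul_assoc,
          inv_mul_cancel₀ (sub_ne_zero.2 (hab i j)), one_mul]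
      rw [Finset.sum_congr rfl fun i _ => hterm i, ← Finset.sum_mul, hx' j, zero_mul]
    funext i
    have := congrArg (Polynomial.eval (ta i)) hN0
    rw [hNdef, Polynomial.eval_finset_sum, Polynomial.eval_zero] at this
    rw [Finset.sum_eq_single i (fun i' _ hne => by
      rw [eval_mul, eval_prod]
      have : (Polynomial.C (ta i) - X).eval (ta i) = 0 := by simp
      rw [Finset.prod_eq_zero (Finset.mem_erase.2 ⟨hne.symm, mem_univ i⟩) (by simp), mul_zero])
      (fun h => absurd (mem_univ i) h)] at this
    rw [eval_mul, eval_C] at this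
    have hpne : (∏ k ∈ univ.erase i, (Polynomial.C (ta k) - X)).eval (ta i) ≠ 0 := by
      rw [eval_prod]
      refine Finset.prod_ne_zero_iff.2 fun k hk => ?_
      simp only [eval_sub, eval_C, eval_X]
      exact sub_ne_zero.2 fun hh => (Finset.mem_erase.1 hk).1 (hta hh.symm).symm
    simpa [hpne] using this
  intro x y h
  have h' : Matrix.vecMul x (Matrix.of fun i j => (ta i - tb j)⁻¹)
      = Matrix.vecMul y (Matrix.of fun i j => (ta i - tb j)⁻¹) := h
  have hxy := key (x - y) (by rw [Matrix.sub_vecMul, h', sub_self])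
  exact sub_eq_zero.1 hxy
lemma cauchy_step1 {K : Type*} [Field K] (m : ℕ) (hm : 1 ≤ m)
    (ta tb : Fin m → K) (hta : Function.Injective ta) (htb : Function.Injective tb)
    (hab : ∀ i j, ta i ≠ tb j) (z w : K)
    (hz : ∀ i, z ≠ ta i) (hw : ∀ j, w ≠ tb j) (hzw : z ≠ w)
    (L : Fin m → K) (hL : L = fun i => ∏ k ∈ univ.erase i, ((ta i - ta k)⁻¹ * (w - ta k)))
    (ρ : Fin m → K)
    (hρ : ρ = fun i => L i * ((∏ k, (ta i - tb k)) * (∏ k, (w - tb k))⁻¹))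
    (j : Fin m) :
    ∑ i, ρ i * (ta i - tb j)⁻¹ = (w - tb j)⁻¹ := by
  have hwtb : ∀ j, w - tb j ≠ 0 := fun j => sub_ne_zero.2 (hw j)
  have hatb : ∀ i j, ta i - tb j ≠ 0 := fun i j => sub_ne_zero.2 (hab i j)
  have hPw : (∏ k, (w - tb k)) ≠ 0 := Finset.prod_ne_zero_iff.2 fun k _ => hwtb k
  have hPe : (∏ k ∈ univ.erase j, (w - tb k)) ≠ 0 :=
    Finset.prod_ne_zero_iff.2 fun k _ => hwtb k
  have hdegp : (∏ k ∈ univ.erase j, (X - C (tb k)) : K[X]).degree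
      < ((univ : Finset (Fin m)).card : WithBot ℕ) := by
    rw [Polynomial.degree_prod]
    simp only [degree_X_sub_C, Finset.sum_const, nsmul_eq_mul, mul_one]
    rw [card_erase_of_mem (mem_univ j), card_univ, Fintype.card_fin]
    exact_mod_cast Nat.sub_lt (by omega) one_pos
  have hl := lag_eval univ ta hta.injOn (∏ k ∈ univ.erase j, (X - C (tb k))) hdegp w
  simp only [eval_prod, eval_sub, eval_X, eval_C] at hl
  have hterm : ∀ i : Fin m, ρ i * (ta i - tb j)⁻¹
      = ((∏ k ∈ univ.erase j, (ta i - tb k)) * ∏ k ∈ univ.erase i, ((ta i - ta k)⁻¹ * (w - ta k)))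
        * (∏ k, (w - tb k))⁻¹ := by
    intro i
    rw [hρ, hL]
    simp only
    rw [← Finset.mul_prod_erase univ (fun k => ta i - tb k) (mem_univ j)]
    calc (∏ k ∈ univ.erase i, ((ta i - ta k)⁻¹ * (w - ta k))) *
          (((ta i - tb j) * ∏ k ∈ univ.erase j, (ta i - tb k)) * (∏ k, (w - tb k))⁻¹) *
          (ta i - tb j)⁻¹
        = ((∏ k ∈ univ.erase j, (ta i - tb k)) * ∏ k ∈ univ.erase i, ((ta i - ta k)⁻¹ * (w - ta k)))
            * (∏ k, (w - tb k))⁻¹ * ((ta i - tb j) * (ta i - tb j)⁻¹) := by ring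
      _ = _ := by rw [mul_inv_cancel₀ (hatb i j), mul_one]
  rw [Finset.sum_congr rfl fun i _ => hterm i, ← Finset.sum_mul, ← hl,
    ← Finset.mul_prod_erase univ (fun k => w - tb k) (mem_univ j)]
  field_simp
lemma cauchy_step4 {K : Type*} [Field K] (m : ℕ) (hm : 1 ≤ m)
    (ta tb : Fin m → K) (hta : Function.Injective ta) (htb : Function.Injective tb)
    (hab : ∀ i j, ta i ≠ tb j) (z w : K)
    (hz : ∀ i, z ≠ ta i) (hw : ∀ j, w ≠ tb j) (hzw : z ≠ w)
    (L : Fin m → K) (hL : L = fun i => ∏ k ∈ univ.erase i, ((ta i - ta k)⁻¹ * (w - ta k)))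
    (ρ : Fin m → K)
    (hρ : ρ = fun i => L i * ((∏ k, (ta i - tb k)) * (∏ k, (w - tb k))⁻¹)) :
    ∑ i, (z - ta i)⁻¹ * ρ i =
      (w - z)⁻¹ *
        ((∏ k, ((w - ta k) / (z - ta k)) * ((z - tb k) / (w - tb k))) - 1) := by
  have hwz : w - z ≠ 0 := sub_ne_zero.2 (Ne.symm hzw)
  have hzta : ∀ i, z - ta i ≠ 0 := fun i => sub_ne_zero.2 (hz i)
  have hwtb : ∀ j, w - tb j ≠ 0 := fun j => sub_ne_zero.2 (hw j)
  have hPw : (∏ k, (w - tb k)) ≠ 0 := Finset.prod_ne_zero_iff.2 fun k _ => hwtb k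
  have hAz : (∏ k, (z - ta k)) ≠ 0 := Finset.prod_ne_zero_iff.2 fun k _ => hzta k
  -- the m+1 node Lagrange identity
  set v : Fin (m + 1) → K := Fin.snoc ta z with hv
  have hvinj : Function.Injective v := by
    intro i j hij
    induction i using Fin.lastCases with
    | last =>
      induction j using Fin.lastCases with
      | last => rfl
      | cast j =>
        rw [hv] at hij; simp only [Fin.snoc_last, Fin.snoc_castSucc] at hij
        exact absurd hij (hz j)
    | cast i =>
      induction j using Fin.lastCases with
      | last =>
        rw [hv] at hij; simp only [Fin.snoc_last, Fin.snoc_castSucc] at hij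
        exact absurd hij.symm (hz i)
      | cast j =>
        rw [hv] at hij; simp only [Fin.snoc_castSucc] at hij
        exact congrArg Fin.castSucc (hta hij)
  have hdegp : (∏ k, (X - C (tb k)) : K[X]).degree < ((univ : Finset (Fin (m+1))).card : WithBot ℕ) := by
    rw [Polynomial.degree_prod]
    simp [degree_X_sub_C, card_univ]
    exact_mod_cast Nat.lt_succ_self m
  have hl := lag_eval univ v hvinj.injOn (∏ k, (X - C (tb k))) hdegp w
  simp only [eval_prod, eval_sub, eval_X, eval_C] at hl
  -- split off the last node
  rw [Fin.sum_univ_castSucc] at hl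
  have herase_last : (univ : Finset (Fin (m+1))).erase (Fin.last m) = univ.map Fin.castSuccEmb := by
    rw [Fin.univ_castSuccEmb, Finset.erase_cons]
  have herase_cast : ∀ i : Fin m, (univ : Finset (Fin (m+1))).erase i.castSucc
      = insert (Fin.last m) ((univ.erase i).map Fin.castSuccEmb) := by
    intro i
    rw [Fin.univ_castSuccEmb, Finset.cons_eq_insert,
      Finset.erase_insert_of_ne (Fin.castSucc_lt_last i).ne', Finset.map_erase Fin.castSuccEmb univ i]
    rfl
  have hemb : ∀ x : Fin m, (Fin.castSuccEmb x : Fin (m + 1)) = x.castSucc := fun _ => rfl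
  have hlastnot : ∀ (s : Finset (Fin m)), Fin.last m ∉ s.map Fin.castSuccEmb := by
    intro s hmem
    rcases Finset.mem_map.1 hmem with ⟨x, -, hx⟩
    exact (Fin.castSucc_lt_last x).ne hx
  have hterm : ∀ i : Fin m, (∏ x : Fin m, (v i.castSucc - tb x)) *
      ∏ j ∈ univ.erase i.castSucc, ((v i.castSucc - v j)⁻¹ * (w - v j))
      = (∏ k, (ta i - tb k)) * (((ta i - z)⁻¹ * (w - z)) * L i) := by
    intro i
    rw [herase_cast i, Finset.prod_insert (hlastnot _), Finset.prod_map]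
    simp only [hemb, hv, Fin.snoc_last, Fin.snoc_castSucc, hL]
  have hlast : (∏ x : Fin m, (v (Fin.last m) - tb x)) *
      ∏ j ∈ univ.erase (Fin.last m), ((v (Fin.last m) - v j)⁻¹ * (w - v j))
      = (∏ k, (z - tb k)) * ∏ k, ((z - ta k)⁻¹ * (w - ta k)) := by
    rw [herase_last, Finset.prod_map]
    simp only [hemb, hv, Fin.snoc_last, Fin.snoc_castSucc]
  rw [Finset.sum_congr rfl (fun i _ => hterm i), hlast] at hl
  have key : ∀ i, (z - ta i)⁻¹ * ρ i = (-(w - z)⁻¹ * (∏ k, (w - tb k))⁻¹) *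
      ((∏ k, (ta i - tb k)) * (((ta i - z)⁻¹ * (w - z)) * L i)) := by
    intro i
    rw [hρ]
    simp only
    rw [show ta i - z = -(z - ta i) by ring, inv_neg]
    field_simp [hzta i, hwz, hPw]
  calc ∑ i, (z - ta i)⁻¹ * ρ i
      = (-(w - z)⁻¹ * (∏ k, (w - tb k))⁻¹) * ∑ i, (∏ k, (ta i - tb k)) *
          (((ta i - z)⁻¹ * (w - z)) * L i) := by
        rw [Finset.mul_sum]; exact Finset.sum_congr rfl fun i _ => key i
    _ = (-(w - z)⁻¹ * (∏ k, (w - tb k))⁻¹) * ((∏ k, (w - tb k)) -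
          (∏ k, (z - tb k)) * ∏ k, ((z - ta k)⁻¹ * (w - ta k))) := by
        congr 1
        linear_combination -hl
    _ = (w - z)⁻¹ * ((∏ k, ((w - ta k) / (z - ta k)) * ((z - tb k) / (w - tb k))) - 1) := by
        simp only [div_eq_mul_inv, Finset.prod_mul_distrib, ← Finset.prod_inv_distrib]
        field_simp
        ring
        rw [Finset.prod_inv_distrib, inv_mul_cancel₀ hPw]

/-- Partial-fraction identity for the inverse Cauchy matrix (Lemma 2.4):
for a Cauchy matrix `A i j = (ã i − b̃ j)⁻¹` with pairwise distinct `ã i`, pairwise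
distinct `b̃ j` and `ã i ≠ b̃ j`, and any `z, w` avoiding the `ã i`, `b̃ j` with `z ≠ w`,
`∑_{i,j} (A⁻¹)_{j i} / ((z − ã i)(w − b̃ j))
  = (1/(w − z)) · (∏_k ((w − ã k)/(z − ã k)) · ((z − b̃ k)/(w − b̃ k)) − 1)`. -/
theorem inverse_cauchy_partial_fraction {K : Type*} [Field K] (m : ℕ) (hm : 1 ≤ m)
    (ta tb : Fin m → K) (hta : Function.Injective ta) (htb : Function.Injective tb)
    (hab : ∀ i j, ta i ≠ tb j) (z w : K)
    (hz : ∀ i, z ≠ ta i) (hw : ∀ j, w ≠ tb j) (hzw : z ≠ w) :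
    ∑ i, ∑ j, (Matrix.of fun i j => (ta i - tb j)⁻¹)⁻¹ j i / ((z - ta i) * (w - tb j)) =
      (w - z)⁻¹ *
        ((∏ k, ((w - ta k) / (z - ta k)) * ((z - tb k) / (w - tb k))) - 1) := by
  set B : Matrix (Fin m) (Fin m) K := Matrix.of fun i j => (ta i - tb j)⁻¹ with hB
  set L : Fin m → K := fun i => ∏ k ∈ univ.erase i, ((ta i - ta k)⁻¹ * (w - ta k)) with hL
  set ρ : Fin m → K := fun i => L i * ((∏ k, (ta i - tb k)) * (∏ k, (w - tb k))⁻¹) with hρ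
  have hU : IsUnit B := cauchy_isUnit ta tb hta htb hab
  have hUdet : IsUnit B.det := (Matrix.isUnit_iff_isUnit_det B).1 hU
  have h1 : ∀ j, ∑ i, ρ i * (ta i - tb j)⁻¹ = (w - tb j)⁻¹ :=
    cauchy_step1 m hm ta tb hta htb hab z w hz hw hzw L hL ρ hρ
  have hmv : Matrix.mulVec (Bᵀ) ρ = fun j => (w - tb j)⁻¹ := by
    funext j
    simp only [Matrix.mulVec, dotProduct, Matrix.transpose_apply, hB, Matrix.of_apply]
    rw [← h1 j]
    exact Finset.sum_congr rfl fun i _ => mul_comm _ _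
  have hρ_eq : ρ = Matrix.mulVec (Bᵀ)⁻¹ (fun j => (w - tb j)⁻¹) := by
    rw [← hmv, Matrix.mulVec_mulVec,
      Matrix.nonsing_inv_mul _ (by rwa [Matrix.det_transpose]), Matrix.one_mulVec]
  have h2 : ∀ i, ∑ j, B⁻¹ j i * (w - tb j)⁻¹ = ρ i := by
    intro i
    rw [congr_fun hρ_eq i, ← Matrix.transpose_nonsing_inv]
    simp only [Matrix.mulVec, dotProduct, Matrix.transpose_apply]
  calc ∑ i, ∑ j, B⁻¹ j i / ((z - ta i) * (w - tb j))
      = ∑ i, (z - ta i)⁻¹ * ρ i := by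
        refine Finset.sum_congr rfl fun i _ => ?_
        rw [← h2 i, Finset.mul_sum]
        refine Finset.sum_congr rfl fun j _ => ?_
        rw [div_eq_mul_inv, mul_inv]
        ring
    _ = (w - z)⁻¹ *
        ((∏ k, ((w - ta k) / (z - ta k)) * ((z - tb k) / (w - tb k))) - 1) :=
      cauchy_step4 m hm ta tb hta htb hab z w hz hw hzw L hL ρ hρ
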